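/- The Plato space Π(ℝ*₊×ℝᵈ) is not closed in the configuration space Γ(ℝ*₊×ℝᵈ) with the vague topology: there exists a sequence γ⁽ⁿ⁾ ∈ Π converging vaguely (i.e. ⟨f,γ⁽ⁿ⁾⟩ → ⟨f,γ⟩ for all f ∈ C_c) to a configuration γ ∈ Γ \ Π. -/

import Mathlib

open Set Topology Filter
open scoped Classical

noncomputable section

/-- The position space `ℝᵈ`. -/
abbrev RD (d : ℕ) := Fin d → ℝ

/-- A point of `Y = (0,∞) × ℝᵈ`, encoded in `ℝ × ℝᵈ` (positivity is a side condition). -/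
abbrev Pt (d : ℕ) := ℝ × RD d

/-- All marks of the configuration are positive, i.e. `γ ⊆ (0,∞) × ℝᵈ`. -/
def PtsPos {d : ℕ} (γ : Set (Pt d)) : Prop := ∀ p ∈ γ, 0 < p.1

/-- Local finiteness: finitely many points in every compact subset of `Y = (0,∞) × ℝᵈ`. -/
def LocFinite {d : ℕ} (γ : Set (Pt d)) : Prop :=
  ∀ K : Set (Pt d), IsCompact K → K ⊆ {p : Pt d | 0 < p.1} → (γ ∩ K).Finite

/-- Pinpointing: at most one mark `s` over each position `x`. -/
def Pinpointing {d : ℕ} (γ : Set (Pt d)) : Prop :=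
  ∀ s₁ s₂ : ℝ, ∀ x : RD d, (s₁, x) ∈ γ → (s₂, x) ∈ γ → s₁ = s₂

/-- The local mass of a configuration on `Λ ⊆ ℝᵈ`: `∑_{(s,x) ∈ γ} s · 1_Λ(x)`. -/
def localMass {d : ℕ} (γ : Set (Pt d)) (Λ : Set (RD d)) : ENNReal :=
  ∑' p : {p : Pt d // p ∈ γ ∧ p.2 ∈ Λ}, ENNReal.ofReal p.val.1

/-- Finite local mass on every compact `Λ ⊆ ℝᵈ`. -/
def FiniteLocalMass {d : ℕ} (γ : Set (Pt d)) : Prop :=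
  ∀ Λ : Set (RD d), IsCompact Λ → localMass γ Λ < ⊤

/-- The Plato space `Π((0,∞) × ℝᵈ)`: locally finite pinpointing configurations
with finite local mass. -/
def Plato {d : ℕ} (γ : Set (Pt d)) : Prop :=
  PtsPos γ ∧ LocFinite γ ∧ Pinpointing γ ∧ FiniteLocalMass γ

/-- The reflection map `R`: `R(γ) = ∑_{(s,x) ∈ γ} s δ_x`, encoded via the weight function
`x ↦ (R γ)({x})` of the resulting discrete measure. -/
def reflect {d : ℕ} (γ : Set (Pt d)) : RD d → ℝ :=
  fun x =>
    letI := Classical.propDecidable (∃ s : ℝ, (s, x) ∈ γ)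
    if h : ∃ s : ℝ, (s, x) ∈ γ then h.choose else 0

/-- The cone `K(ℝᵈ)` of positive discrete Radon measures `η = ∑ᵢ sᵢ δ_{xᵢ}`, encoded by
weight functions `m x = η({x})`: nonnegative, countably many atoms, finite mass on compacts. -/
def InCone {d : ℕ} (m : RD d → ℝ) : Prop :=
  (∀ x, 0 ≤ m x) ∧ {x | m x ≠ 0}.Countable ∧
    ∀ Λ : Set (RD d), IsCompact Λ → (∑' x : Λ, ENNReal.ofReal (m x)) < ⊤

/-- The relation `ξ ⊂ η` on the cone: `τ(ξ) ⊆ τ(η)` and `s_x(ξ) = s_x(η)` on `τ(ξ)`. -/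
def ConeLE {d : ℕ} (ξ η : RD d → ℝ) : Prop :=
  ∀ x, ξ x ≠ 0 → ξ x = η x



lemma finite_plato_mass {d : ℕ} (γ : Set (Pt d)) (hγ : γ.Finite) :
    FiniteLocalMass γ := by
  intro Λ _
  have hfin : {p : Pt d | p ∈ γ ∧ p.2 ∈ Λ}.Finite := hγ.subset (fun p hp => hp.1)
  haveI : Finite {p : Pt d // p ∈ γ ∧ p.2 ∈ Λ} := hfin.to_subtype
  haveI := Fintype.ofFinite {p : Pt d // p ∈ γ ∧ p.2 ∈ Λ}
  rw [localMass, tsum_fintype]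
  exact ENNReal.sum_lt_top.2 (fun a _ => ENNReal.ofReal_lt_top)

lemma tsum_pair_set {α β : Type*} [AddCommGroup β] [TopologicalSpace β] [T2Space β]
    (f : α → β) {a b : α} (h : a ≠ b) :
    ∑' p : ({a, b} : Set α), f p = f a + f b := by
  rw [tsum_subtype]
  rw [tsum_eq_sum (s := {a, b}) (f := ({a, b} : Set α).indicator f) ?_]
  · rw [Finset.sum_pair h]
    rw [Set.indicator_of_mem (by simp), Set.indicator_of_mem (by simp)]
  · intro x hx
    apply Set.indicator_of_notMem
    simpa using hx

/-- The Plato space is not closed in the configuration space with the vague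
topology: some sequence of Plato configurations converges vaguely (tested against all
continuous compactly supported f on (0,∞)×ℝᵈ) to a locally finite configuration
outside the Plato space. -/
theorem plato_not_closed (d : ℕ) (hd : 1 ≤ d) :
    ∃ (γ : ℕ → Set (Pt d)) (γlim : Set (Pt d)),
      (∀ n, Plato (γ n)) ∧
      PtsPos γlim ∧ LocFinite γlim ∧
      ¬ (Pinpointing γlim ∧ FiniteLocalMass γlim) ∧
      ∀ f : Pt d → ℝ, Continuous f → HasCompactSupport f →
        tsupport f ⊆ {p : Pt d | 0 < p.1} →
        Tendsto (fun n => ∑' p : (γ n : Set (Pt d)), f p.val) atTop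
          (nhds (∑' p : (γlim : Set (Pt d)), f p.val)) := by
  set x : ℕ → RD d := fun n _ => 1 / (n + 1 : ℝ) with hx
  have hx0 : ∀ n, x n ≠ 0 := by
    intro n h
    have h0 := congrFun h ⟨0, hd⟩
    have : (n + 1 : ℝ) ≠ 0 := by positivity
    simp only [x, Pi.zero_apply, div_eq_zero_iff] at h0
    simp_all
  refine ⟨fun n => {((1 : ℝ), x n), ((2 : ℝ), (0 : RD d))},
    {((1 : ℝ), (0 : RD d)), ((2 : ℝ), (0 : RD d))}, ?_, ?_, ?_, ?_, ?_⟩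
  · intro n
    refine ⟨?_, ?_, ?_, ?_⟩
    · rintro p (rfl | rfl) <;> norm_num
    · intro K _ _
      exact (Set.toFinite _).inter_of_left K
    · rintro s₁ s₂ y h₁ h₂
      simp only [Set.mem_insert_iff, Set.mem_singleton_iff, Prod.mk.injEq] at h₁ h₂
      rcases h₁ with ⟨r1, r2⟩ | ⟨r1, r2⟩ <;> rcases h₂ with ⟨t1, t2⟩ | ⟨t1, t2⟩
      · rw [r1, t1]
      · exact absurd (r2.symm.trans t2) (hx0 n)
      · exact absurd (t2.symm.trans r2) (hx0 n)
      · rw [r1, t1]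
    · exact finite_plato_mass _ (Set.toFinite _)
  · rintro p (rfl | rfl) <;> norm_num
  · intro K _ _
    exact (Set.toFinite _).inter_of_left K
  · rintro ⟨hp, -⟩
    have := hp 1 2 0 (by simp) (by simp)
    norm_num at this
  · intro f hf _ _
    have hne : ∀ n, ((1 : ℝ), x n) ≠ ((2 : ℝ), (0 : RD d)) := by
      intro n h; simpa using congrArg Prod.fst h
    have hne' : ((1 : ℝ), (0 : RD d)) ≠ ((2 : ℝ), (0 : RD d)) := by
      intro h; simpa using congrArg Prod.fst h
    simp only [fun n => tsum_pair_set f (hne n), tsum_pair_set f hne']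
    have hxlim : Tendsto (fun n => ((1 : ℝ), x n)) atTop (nhds ((1 : ℝ), (0 : RD d))) := by
      refine Tendsto.prodMk_nhds tendsto_const_nhds ?_
      rw [tendsto_pi_nhds]
      intro i
      simpa [x] using tendsto_one_div_add_atTop_nhds_zero_nat (𝕜 := ℝ)
    exact ((hf.tendsto _).comp hxlim).add tendsto_const_nhds
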